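/- Let P ⊆ ℝⁿ_{≥0} be a nonempty closed convex set with P + ℝⁿ_{≥0} ⊆ P. Define the family ℐ = {I_k}_{k∈ℕ} of monomial ideals by I_k = ⟨x^a : a ∈ kP ∩ ℤⁿ⟩. Then ℐ is a graded family of monomial ideals (I_p·I_q ⊆ I_{p+q}), and its Newton–Okounkov body Δ(ℐ) equals P. -/

import Mathlib

open MvPolynomial Pointwise

/-- The Newton polyhedron of a monomial ideal: convex hull of exponent vectors of monomials in `I`. -/
def NP {n : ℕ} {𝕜 : Type*} [Field 𝕜] (I : Ideal (MvPolynomial (Fin n) 𝕜)) : Set (Fin n → ℝ) :=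
  convexHull ℝ {x | ∃ a : Fin n →₀ ℕ, monomial a (1 : 𝕜) ∈ I ∧ x = fun i => (a i : ℝ)}

/-- `I` is a monomial ideal: generated by monomials. -/
def IsMonomialIdeal {n : ℕ} {𝕜 : Type*} [Field 𝕜] (I : Ideal (MvPolynomial (Fin n) 𝕜)) : Prop :=
  ∃ S : Set (Fin n →₀ ℕ), I = Ideal.span ((fun a => monomial a (1 : 𝕜)) '' S)

/-- The integral closure of an ideal `I`: elements satisfying an equation of integral dependence
`f^m + c₁ f^{m-1} + ⋯ + c_m = 0` with `c_i ∈ I^i`. -/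
def intCl {R : Type*} [CommRing R] (I : Ideal R) : Set R :=
  {f | ∃ m : ℕ, 0 < m ∧ ∃ c : ℕ → R, (∀ i ∈ Finset.Icc 1 m, c i ∈ I ^ i) ∧
    f ^ m + ∑ i ∈ Finset.Icc 1 m, c i * f ^ (m - i) = 0}

/-- The Newton–Okounkov body of a graded family of monomial ideals. -/
def NObody {n : ℕ} {𝕜 : Type*} [Field 𝕜] (F : ℕ → Ideal (MvPolynomial (Fin n) 𝕜)) :
    Set (Fin n → ℝ) :=
  closure (⋃ k : ℕ, {x | 0 < k ∧ ∃ a : Fin n →₀ ℕ, monomial a (1 : 𝕜) ∈ F k ∧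
    x = fun i => (a i : ℝ) / k})

/-- The limiting body `⋃ₖ (1/k) NP(I_k)` of a graded family. -/
def limitBody {n : ℕ} {𝕜 : Type*} [Field 𝕜] (F : ℕ → Ideal (MvPolynomial (Fin n) 𝕜)) :
    Set (Fin n → ℝ) :=
  ⋃ k : ℕ, ⋃ (_ : 0 < k), ((k : ℝ)⁻¹) • NP (F k)

/-- A polyhedron: a finite intersection of closed half-spaces. -/
def IsPolyhedron {n : ℕ} (P : Set (Fin n → ℝ)) : Prop :=
  ∃ H : Finset ((Fin n → ℝ) × ℝ), P = {x | ∀ h ∈ H, h.2 ≤ ∑ i, h.1 i * x i}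

/-- Maximum dimension of a compact face (faces are taken to be extreme subsets). -/
noncomputable def mdc {n : ℕ} (P : Set (Fin n → ℝ)) : ℕ :=
  sSup {d | ∃ F : Set (Fin n → ℝ), F.Nonempty ∧ IsExtreme ℝ P F ∧ IsCompact F ∧
    Module.finrank ℝ (vectorSpan ℝ F) = d}

/-- The symbolic power family of a monomial ideal of linear-power type:
`I^{(k)} = ⋂ⱼ 𝔭ⱼ^{k ωⱼ}` where `𝔭ⱼ` is generated by the variables in `supp j`. -/
noncomputable def symb {n : ℕ} {𝕜 : Type*} [Field 𝕜] {ι : Type*} [Fintype ι]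
    (supp : ι → Finset (Fin n)) (ω : ι → ℕ) (k : ℕ) : Ideal (MvPolynomial (Fin n) 𝕜) :=
  ⨅ j, (Ideal.span ((fun i => (X i : MvPolynomial (Fin n) 𝕜)) '' (supp j : Set (Fin n)))) ^ (k * ω j)

/-- The symbolic polyhedron of a monomial ideal of linear-power type. -/
def SPset {n : ℕ} {ι : Type*} (supp : ι → Finset (Fin n)) (ω : ι → ℕ) : Set (Fin n → ℝ) :=
  {x | (∀ i, 0 ≤ x i) ∧ ∀ j, (ω j : ℝ) ≤ ∑ i ∈ supp j, x i}

/-- Wolff's construction realizing any closed convex absorbing set as a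
Newton–Okounkov body. -/
lemma genset_eq {n : ℕ} {𝕜 : Type*} [Field 𝕜] (k : ℕ) (P : Set (Fin n → ℝ)) :
    {f | ∃ a : Fin n →₀ ℕ, (fun i => (a i : ℝ)) ∈ (k : ℝ) • P ∧ f = monomial a (1 : 𝕜)}
      = (fun a => monomial a (1 : 𝕜)) '' {a : Fin n →₀ ℕ | (fun i => (a i : ℝ)) ∈ (k : ℝ) • P} := by
  ext f
  constructor
  · rintro ⟨a, h, rfl⟩; exact ⟨a, h, rfl⟩
  · rintro ⟨a, h, rfl⟩; exact ⟨a, h, rfl⟩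

theorem stmt17 {n : ℕ} {𝕜 : Type*} [Field 𝕜] (P : Set (Fin n → ℝ))
    (hne : P.Nonempty) (hcl : IsClosed P) (hconv : Convex ℝ P)
    (hP0 : ∀ x ∈ P, ∀ i, 0 ≤ x i)
    (habs : ∀ x ∈ P, ∀ w : Fin n → ℝ, (∀ i, 0 ≤ w i) → x + w ∈ P)
    (F : ℕ → Ideal (MvPolynomial (Fin n) 𝕜))
    (hF : ∀ k, F k = Ideal.span
      {f | ∃ a : Fin n →₀ ℕ, (fun i => (a i : ℝ)) ∈ (k : ℝ) • P ∧ f = monomial a (1 : 𝕜)}) :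
    (∀ p q : ℕ, F p * F q ≤ F (p + q)) ∧ NObody F = P := by
  constructor
  · -- gradedness
    intro p q
    rw [hF p, hF q, hF (p + q), Ideal.span_mul_span']
    apply Ideal.span_le.2
    rintro f hf
    rw [Set.mem_mul] at hf
    obtain ⟨g1, ⟨a, ha, rfl⟩, g2, ⟨b, hb, rfl⟩, rfl⟩ := hf
    apply Ideal.subset_span
    refine ⟨a + b, ?_, ?_⟩
    · have h : ((p : ℝ) + (q : ℝ)) • P = (p : ℝ) • P + (q : ℝ) • P :=
        hconv.add_smul (by positivity) (by positivity)
      have : (fun i => ((a + b) i : ℝ)) ∈ (p : ℝ) • P + (q : ℝ) • P := by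
        have h2 := Set.add_mem_add ha hb
        have h3 : (fun i => ((a + b) i : ℝ)) = (fun i => (a i : ℝ)) + (fun i => (b i : ℝ)) := by
          funext i
          simp [Finsupp.add_apply]
        rw [h3]; exact h2
      rw [← h] at this
      rwa [show ((p + q : ℕ) : ℝ) = (p : ℝ) + (q : ℝ) by push_cast; ring]
    · rw [monomial_mul, one_mul]
  · -- NObody = P
    apply Set.Subset.antisymm
    · -- closure ⊆ P
      apply closure_minimal _ hcl
      rintro x hx
      simp only [Set.mem_iUnion, Set.mem_setOf_eq] at hx
      obtain ⟨k, hk, a, hma, rfl⟩ := hx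
      rw [hF k, genset_eq, MvPolynomial.mem_ideal_span_monomial_image] at hma
      have hsupp : a ∈ (monomial a (1 : 𝕜)).support := by
        classical
        rw [MvPolynomial.support_monomial, if_neg one_ne_zero]
        exact Finset.mem_singleton_self a
      obtain ⟨b, hb, hba⟩ := hma a hsupp
      obtain ⟨y, hy, hby⟩ := hb
      have hkpos : (0:ℝ) < (k:ℝ) := by exact_mod_cast hk
      set w : Fin n → ℝ := fun i => (a i : ℝ) / k - y i with hw
      have hw0 : ∀ i, 0 ≤ w i := by
        intro i
        have hbi : (b i : ℝ) = (k : ℝ) * y i := by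
          have := congrFun hby.symm i
          simpa using this
        have hab : (b i : ℝ) ≤ (a i : ℝ) := by
          exact_mod_cast Finsupp.le_def.1 hba i
        have : (k:ℝ) * y i ≤ (a i : ℝ) := by rw [← hbi]; exact hab
        simp only [hw, sub_nonneg]
        rw [le_div_iff₀ hkpos]
        linarith
      have := habs y hy w hw0
      convert this using 1
      funext i
      simp [hw]
    · -- P ⊆ closure
      intro x hx
      set u : ℕ → (Fin n → ℝ) := fun k => fun i => (⌈(k:ℝ) * x i⌉₊ : ℝ) / k with hu
      have hx0 : ∀ i, 0 ≤ x i := hP0 x hx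
      have htend : Filter.Tendsto u Filter.atTop (nhds x) := by
        rw [tendsto_pi_nhds]
        intro i
        have hub : Filter.Tendsto (fun k : ℕ => x i + 1 / (k:ℝ)) Filter.atTop (nhds (x i)) := by
          have h4 : Filter.Tendsto (fun k : ℕ => x i + 1 / (k:ℝ)) Filter.atTop (nhds (x i + 0)) :=
            tendsto_const_nhds.add tendsto_one_div_atTop_nhds_zero_nat
          simpa using h4
        refine tendsto_of_tendsto_of_tendsto_of_le_of_le'
          (g := fun _ => x i) (h := fun k : ℕ => x i + 1 / (k:ℝ)) tendsto_const_nhds hub ?_ ?_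
        · filter_upwards [Filter.eventually_ge_atTop 1] with k hk
          have hkpos : (0:ℝ) < (k:ℝ) := by exact_mod_cast hk
          rw [hu]
          rw [le_div_iff₀ hkpos]
          calc x i * k = (k:ℝ) * x i := by ring
          _ ≤ (⌈(k:ℝ) * x i⌉₊ : ℝ) := Nat.le_ceil _
        · filter_upwards [Filter.eventually_ge_atTop 1] with k hk
          have hkpos : (0:ℝ) < (k:ℝ) := by exact_mod_cast hk
          have hc : (⌈(k:ℝ) * x i⌉₊ : ℝ) < (k:ℝ) * x i + 1 :=
            Nat.ceil_lt_add_one (mul_nonneg hkpos.le (hx0 i))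
          rw [hu]
          rw [div_le_iff₀ hkpos]
          have : (x i + 1 / (k:ℝ)) * k = (k:ℝ) * x i + 1 := by
            field_simp
          rw [this]
          linarith
      apply mem_closure_of_tendsto htend
      filter_upwards [Filter.eventually_ge_atTop 1] with k hk
      have hkpos : (0:ℝ) < (k:ℝ) := by exact_mod_cast hk
      set a : Fin n →₀ ℕ := Finsupp.equivFunOnFinite.symm (fun i => ⌈(k:ℝ) * x i⌉₊) with ha
      have haf : ∀ i, a i = ⌈(k:ℝ) * x i⌉₊ := fun i => rfl
      have hmem : (fun i => (a i : ℝ)) ∈ (k : ℝ) • P := by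
        rw [Set.mem_smul_set]
        refine ⟨fun i => (a i : ℝ) / k, ?_, ?_⟩
        · have hw0 : ∀ i, 0 ≤ (a i : ℝ) / k - x i := by
            intro i
            rw [sub_nonneg, le_div_iff₀ hkpos, haf]
            calc x i * k = (k:ℝ) * x i := by ring
            _ ≤ _ := Nat.le_ceil _
          have := habs x hx (fun i => (a i : ℝ) / k - x i) hw0
          convert this using 1
          funext i; simp
        · funext i
          simp only [Pi.smul_apply, smul_eq_mul]
          field_simp
      refine Set.mem_iUnion.2 ⟨k, hk, a, ?_, ?_⟩
      · rw [hF k]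
        exact Ideal.subset_span ⟨a, hmem, rfl⟩
      · funext i
        rw [hu, haf]
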